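/- The sequence B = (b_0,…,b_m) has the same value as the input binary number: Σ_{i=0}^{m} 2^i · b_i = Σ_{i=0}^{m−1} 2^i · a_i. Consequently B is a compact signed-digit representation of (a_0,…,a_{m−1}). -/

import Mathlib

/-- The carry sequence: `c i = ⋁_{1 ≤ j ≤ i} ((a j ∧ a (j-1)) ∧ ⋀_{j < k ≤ i} (a k ∨ a (k-1)))`. -/
noncomputable def carry (a : ℕ → Bool) (i : ℕ) : Bool :=
  (Finset.Icc 1 i).sup fun j =>
    (a j && a (j - 1)) && (Finset.Ioc j i).inf fun k => a k || a (k - 1)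

/-- The output digits: `b i = (a i ⊕ c i) · (−1)^{a (i+1)}`. -/
noncomputable def digit (a : ℕ → Bool) (i : ℕ) : ℤ :=
  ((Bool.xor (a i) (carry a i)).toNat : ℤ) * (-1) ^ (a (i + 1)).toNat

lemma carry_zero (a : ℕ → Bool) : carry a 0 = false := by
  simp [carry]

lemma bool_sup : ∀ x y : Bool, x ⊔ y = (x || y) := by decide
lemma bool_inf : ∀ x y : Bool, x ⊓ y = (x && y) := by decide
lemma bool_top : (⊤ : Bool) = true := by decide
lemma bool_bot : (⊥ : Bool) = false := by decide

lemma sup_and (s : Finset ℕ) (f : ℕ → Bool) (g : Bool) :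
    (s.sup fun j => f j && g) = (s.sup f && g) := by
  induction s using Finset.induction with
  | empty => simp [bool_bot]
  | insert _ _ h ih =>
      rw [Finset.sup_insert, Finset.sup_insert, bool_sup, bool_sup, ih]
      cases f _ <;> cases g <;> simp

lemma carry_succ (a : ℕ → Bool) (i : ℕ) :
    carry a (i + 1) = ((a (i + 1) && a i) || (carry a i && (a (i + 1) || a i))) := by
  unfold carry
  rw [show Finset.Icc 1 (i + 1) = insert (i + 1) (Finset.Icc 1 i) by
    ext x; simp only [Finset.mem_insert, Finset.mem_Icc]; omega]
  rw [Finset.sup_insert, bool_sup]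
  congr 1
  · simp [bool_top]
  · rw [← sup_and (Finset.Icc 1 i)
      (fun j => (a j && a (j - 1)) && (Finset.Ioc j i).inf fun k => a k || a (k - 1))
      (a (i + 1) || a i)]
    apply Finset.sup_congr rfl
    intro j hj
    simp only [Finset.mem_Icc] at hj
    rw [show Finset.Ioc j (i + 1) = insert (i + 1) (Finset.Ioc j i) by
      ext x; simp only [Finset.mem_insert, Finset.mem_Ioc]; omega]
    rw [Finset.inf_insert, bool_inf]
    simp only [Nat.add_sub_cancel]
    cases a j && a (j - 1) <;> cases a (i + 1) || a i <;> simp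

lemma digit_eq (a : ℕ → Bool) (i : ℕ) :
    digit a i = ((a i).toNat : ℤ) + ((carry a i).toNat : ℤ)
      - 2 * ((carry a (i + 1)).toNat : ℤ) := by
  rw [carry_succ]
  rcases Bool.eq_false_or_eq_true (a i) with h1 | h1 <;>
    rcases Bool.eq_false_or_eq_true (a (i + 1)) with h2 | h2 <;>
    rcases Bool.eq_false_or_eq_true (carry a i) with h3 | h3 <;>
    simp [digit, h1, h2, h3]

lemma sum_digit (a : ℕ → Bool) (n : ℕ) :
    ∑ i ∈ Finset.range n, (2 : ℤ) ^ i * digit a i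
      = ∑ i ∈ Finset.range n, (2 : ℤ) ^ i * ((a i).toNat : ℤ)
        - 2 ^ n * ((carry a n).toNat : ℤ) := by
  induction n with
  | zero => simp [carry_zero]
  | succ n ih =>
      rw [Finset.sum_range_succ, Finset.sum_range_succ, ih, digit_eq]
      ring

/-- `B = (b 0, …, b m)` has the same value as the binary number
`(a 0, …, a (m−1))`; consequently `B` is a compact signed-digit representation of it. -/
theorem digit_value_eq (m : ℕ) (a : ℕ → Bool) (ha : ∀ i, m ≤ i → a i = false) :
    (∑ i ∈ Finset.range (m + 1), (2 : ℤ) ^ i * digit a i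
        = ∑ i ∈ Finset.range m, (2 : ℤ) ^ i * ((a i).toNat : ℤ))
    ∧ (∀ i, digit a i = -1 ∨ digit a i = 0 ∨ digit a i = 1)
    ∧ (∀ i, digit a i * digit a (i + 1) = 0) := by
  refine ⟨?_, ?_, ?_⟩
  · rw [sum_digit, Finset.sum_range_succ, carry_succ, ha m le_rfl,
      ha (m + 1) (by omega)]
    simp
  · intro i
    rcases Bool.eq_false_or_eq_true ((a i).xor (carry a i)) with h1 | h1 <;>
      rcases Bool.eq_false_or_eq_true (a (i + 1)) with h2 | h2 <;>
      simp [digit, h1, h2]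
  · intro i
    have key : ((a i).xor (carry a i)).toNat * ((a (i + 1)).xor (carry a (i + 1))).toNat = 0 := by
      rw [carry_succ]
      rcases Bool.eq_false_or_eq_true (a i) with h1 | h1 <;>
        rcases Bool.eq_false_or_eq_true (a (i + 1)) with h2 | h2 <;>
        rcases Bool.eq_false_or_eq_true (carry a i) with h3 | h3 <;>
        simp [h1, h2, h3]
    have : digit a i * digit a (i + 1)
        = (((a i).xor (carry a i)).toNat * ((a (i + 1)).xor (carry a (i + 1))).toNat : ℤ)
          * ((-1) ^ (a (i + 1)).toNat * (-1) ^ (a (i + 2)).toNat) := by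
      simp [digit]
      ring
    have key' : (((a i).xor (carry a i)).toNat : ℤ)
        * (((a (i + 1)).xor (carry a (i + 1))).toNat : ℤ) = 0 := by exact_mod_cast key
    rw [this, key', zero_mul]
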